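/- Let θ ∈ (−π/2, π/2), r > 0, d > 0, M > 0. Then the angular span satisfies the identity arctan (M*d/(2*r*cos θ) − tan θ) + arctan (M*d/(2*r*cos θ) + tan θ) = arctan ((M*d/2 * cos θ)/(r − M*d/2 * sin θ)) + arctan ((M*d/2 * cos θ)/(r + M*d/2 * sin θ)), provided r > (M*d/2)*|sin θ|. -/

import Mathlib

open Real

lemma arg_mk_of_re_pos {a b : ℝ} (ha : 0 < a) :
    Complex.arg ⟨a, b⟩ = Real.arctan (b / a) := by
  have hz : (⟨a, b⟩ : ℂ) ≠ 0 := by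
    intro h
    have : a = 0 := congrArg Complex.re h
    linarith
  have habs : |Complex.arg ⟨a, b⟩| < π / 2 :=
    Complex.abs_arg_lt_pi_div_two_iff.2 (Or.inl ha)
  have hmem : Complex.arg ⟨a, b⟩ ∈ Set.Ioo (-(π / 2)) (π / 2) := by
    constructor <;> [linarith [neg_abs_le (Complex.arg ⟨a, b⟩)];
      linarith [le_abs_self (Complex.arg ⟨a, b⟩)]]
  have htan : Real.tan (Complex.arg ⟨a, b⟩) = b / a := by
    rw [Real.tan_eq_sin_div_cos, Complex.sin_arg, Complex.cos_arg hz]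
    have habs0 : (0 : ℝ) < ‖(⟨a, b⟩ : ℂ)‖ := norm_pos_iff.2 hz
    field_simp
  rw [← htan, Real.arctan_tan hmem.1 hmem.2]

/-- Sum of args of two right-half-plane numbers is arg of the product. -/
lemma arg_add_arg {z w : ℂ} (hz : 0 < z.re) (hw : 0 < w.re) :
    Complex.arg z + Complex.arg w = Complex.arg (z * w) := by
  have hz0 : z ≠ 0 := fun h => by simp [h] at hz
  have hw0 : w ≠ 0 := fun h => by simp [h] at hw
  have h1 : |Complex.arg z| < π / 2 := Complex.abs_arg_lt_pi_div_two_iff.2 (Or.inl hz)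
  have h2 : |Complex.arg w| < π / 2 := Complex.abs_arg_lt_pi_div_two_iff.2 (Or.inl hw)
  have := Complex.arg_mul hz0 hw0 (by
    constructor
    · have := neg_abs_le (Complex.arg z); have := neg_abs_le (Complex.arg w); linarith
    · have := le_abs_self (Complex.arg z); have := le_abs_self (Complex.arg w); linarith)
  linarith

theorem angular_span_alternative_expression (θ r d M : ℝ)
    (hθ : θ ∈ Set.Ioo (-(π / 2)) (π / 2)) (hr : r > 0) (hd : d > 0) (hM : M > 0)
    (hsep : r > (M * d / 2) * |sin θ|) :
    arctan (M * d / (2 * r * cos θ) - tan θ) + arctan (M * d / (2 * r * cos θ) + tan θ) =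
      arctan ((M * d / 2 * cos θ) / (r - M * d / 2 * sin θ)) +
        arctan ((M * d / 2 * cos θ) / (r + M * d / 2 * sin θ)) := by
  obtain ⟨hθ1, hθ2⟩ := hθ
  set L := M * d / 2 with hL
  have hLpos : 0 < L := by positivity
  have hc : 0 < cos θ := Real.cos_pos_of_mem_Ioo ⟨hθ1, hθ2⟩
  set s := sin θ
  set c := cos θ
  have hsc : s ^ 2 + c ^ 2 = 1 := sin_sq_add_cos_sq θ
  have hrc : 0 < r * c := by positivity
  have hLs : |L * s| < r := by
    rw [abs_mul, abs_of_pos hLpos]; exact hsep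
  have hp1 : 0 < r - L * s := by
    have := le_abs_self (L * s); linarith
  have hp2 : 0 < r + L * s := by
    have := neg_abs_le (L * s); linarith
  -- rewrite LHS arguments
  have e1 : M * d / (2 * r * c) - tan θ = (L - r * s) / (r * c) := by
    rw [Real.tan_eq_sin_div_cos]; change M * d / (2 * r * c) - s / c = _
    field_simp [hL]; ring
  have e2 : M * d / (2 * r * c) + tan θ = (L + r * s) / (r * c) := by
    rw [Real.tan_eq_sin_div_cos]; change M * d / (2 * r * c) + s / c = _
    field_simp [hL]; ring
  rw [e1, e2]
  have a1 : arctan ((L - r * s) / (r * c)) = Complex.arg ⟨r * c, L - r * s⟩ :=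
    (arg_mk_of_re_pos hrc).symm
  have a2 : arctan ((L + r * s) / (r * c)) = Complex.arg ⟨r * c, L + r * s⟩ :=
    (arg_mk_of_re_pos hrc).symm
  have a3 : arctan (L * c / (r - L * s)) = Complex.arg ⟨r - L * s, L * c⟩ :=
    (arg_mk_of_re_pos hp1).symm
  have a4 : arctan (L * c / (r + L * s)) = Complex.arg ⟨r + L * s, L * c⟩ :=
    (arg_mk_of_re_pos hp2).symm
  rw [a1, a2, a3, a4, arg_add_arg (z := ⟨r * c, L - r * s⟩) hrc hrc,
    arg_add_arg (z := ⟨r - L * s, L * c⟩) hp1 hp2]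
  congr 1
  clear_value L s c
  apply Complex.ext
  · simp only [Complex.mul_re]
    linear_combination (r ^ 2 + L ^ 2) * hsc
  · simp only [Complex.mul_im]
    ring
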